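/- Every primitive Eisensteinian triplet (a, b, c) with b > c and (a, b, c) ≠ (1, 1, 1) is of the form a = m² + mn + n², b = m² + 2mn, and c = n² + 2mn or c = m² − n², for some positive integers m > n > 0 with gcd(m, n) = 1 and m ≢ n (mod 3). -/

import Mathlib

def IsPrimitiveEisenstein (a b c : ℤ) : Prop :=
  0 < a ∧ 0 < b ∧ 0 < c ∧ a ^ 2 = b ^ 2 + c ^ 2 - b * c ∧
    Int.gcd a (Int.gcd b c) = 1


set_option maxHeartbeats 1000000

lemma eis_key (a u v : ℤ) (ha : 0 < a) (hu : 0 < u) (hv : 0 < v)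
    (hg : Int.gcd u v = 1) (h : a ^ 2 = u ^ 2 + u * v + v ^ 2) (hodd : ¬ (2:ℤ) ∣ u) :
    ∃ m n : ℤ, 0 < n ∧ n < m ∧ Int.gcd m n = 1 ∧ ¬ (3:ℤ) ∣ (m - n) ∧
      a = m ^ 2 + m * n + n ^ 2 ∧
      ((u = m ^ 2 - n ^ 2 ∧ v = n ^ 2 + 2 * m * n) ∨
       (u = n ^ 2 + 2 * m * n ∧ v = m ^ 2 - n ^ 2)) := by
  set r : ℤ := 2*a - u - 2*v with hrdef
  set s : ℤ := 2*a + u + 2*v with hsdef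
  have hrs : r * s = 3 * u ^ 2 := by rw [hrdef, hsdef]; linear_combination 4 * h
  have hs : 0 < s := by rw [hsdef]; linarith
  have hr : 0 < r := by nlinarith [sq_nonneg u]
  -- not both divisible by 3
  have hn3 : ¬ ((3:ℤ) ∣ r ∧ (3:ℤ) ∣ s) := by
    rintro ⟨h3r, h3s⟩
    have h3a : (3:ℤ) ∣ a := by omega
    have h3uv : (3:ℤ) ∣ u - v := by omega
    obtain ⟨a1, ha1⟩ := h3a
    obtain ⟨k, hk⟩ := h3uv
    have h3v2 : (3:ℤ) ∣ v ^ 2 := by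
      refine ⟨a1 ^ 2 - k * v - k ^ 2, ?_⟩
      have : u = v + 3 * k := by linarith
      rw [this] at h
      rw [ha1] at h
      nlinarith [h]
    have h3v : (3:ℤ) ∣ v := Int.prime_three.dvd_of_dvd_pow h3v2
    have h3u : (3:ℤ) ∣ u := by omega
    have := Int.dvd_gcd h3u h3v
    rw [hg] at this
    norm_num at this
  have hrodd : ¬ (2:ℤ) ∣ r := by omega
  have hsodd : ¬ (2:ℤ) ∣ s := by omega
  -- coprimality of r and s
  have hcop : IsCoprime r s := by
    rw [Int.isCoprime_iff_gcd_eq_one]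
    by_contra hne
    obtain ⟨p, hp, hpd⟩ := Nat.exists_prime_and_dvd hne
    have hpr : (p:ℤ) ∣ r := (Int.natCast_dvd_natCast.2 hpd).trans (Int.gcd_dvd_left _ _)
    have hps : (p:ℤ) ∣ s := (Int.natCast_dvd_natCast.2 hpd).trans (Int.gcd_dvd_right _ _)
    have hpi : Prime (p:ℤ) := Nat.prime_iff_prime_int.mp hp
    have hp2 : p ≠ 2 := by rintro rfl; exact hrodd (by exact_mod_cast hpr)
    have hp3 : p ≠ 3 := by rintro rfl; exact hn3 ⟨by exact_mod_cast hpr, by exact_mod_cast hps⟩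
    have hpu : (p:ℤ) ∣ u := by
      have hd : (p:ℤ) ∣ 3 * u ^ 2 := hrs ▸ hpr.mul_right s
      rcases hpi.dvd_mul.mp hd with h' | h'
      · exfalso
        have := Int.le_of_dvd (by norm_num) h'
        have h2 := hp.two_le
        have : p ≤ 3 := by exact_mod_cast this
        interval_cases p
        · exact hp2 rfl
        · exact hp3 rfl
      · exact hpi.dvd_of_dvd_pow h'
    have hpa : (p:ℤ) ∣ a := by
      have h4a : (p:ℤ) ∣ 4 * a := by
        have hsum : r + s = 4 * a := by rw [hrdef, hsdef]; ring
        exact hsum ▸ dvd_add hpr hps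
      rcases hpi.dvd_mul.mp h4a with h' | h'
      · exfalso
        have := Int.le_of_dvd (by norm_num) h'
        have h2 := hp.two_le
        have hle : p ≤ 4 := by exact_mod_cast this
        have h4 : (p:ℤ) ∣ 4 := h'
        interval_cases p
        · exact hp2 rfl
        · exact hp3 rfl
        · norm_num at hp
      · exact h'
    have hpv : (p:ℤ) ∣ v := by
      have : (p:ℤ) ∣ v ^ 2 := by
        have : v ^ 2 = a ^ 2 - u ^ 2 - u * v := by linarith
        rw [this]
        exact dvd_sub (dvd_sub (dvd_pow hpa two_ne_zero) (dvd_pow hpu two_ne_zero)) (hpu.mul_right v)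
      exact hpi.dvd_of_dvd_pow this
    have := Int.dvd_coe_gcd hpu hpv
    rw [hg] at this
    have := Int.le_of_dvd one_pos this
    have := hp.two_le
    omega
  have h3rs : (3:ℤ) ∣ r * s := ⟨u ^ 2, hrs⟩
  rcases Int.prime_three.dvd_mul.mp h3rs with h3r | h3s
  · -- case 3 ∣ r : right disjunct
    have h3s : ¬ (3:ℤ) ∣ s := fun hh => hn3 ⟨h3r, hh⟩
    obtain ⟨r1, hr1⟩ := h3r
    have h1 : r1 * s = u ^ 2 := by
      have : 3 * (r1 * s) = 3 * u ^ 2 := by rw [← hrs, hr1]; ring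
      linarith
    have hcop1 : IsCoprime r1 s := hcop.of_isCoprime_of_dvd_left ⟨3, by linarith [hr1]⟩
    obtain ⟨e0, he0⟩ := Int.sq_of_isCoprime hcop1 h1
    obtain ⟨f0, hf0⟩ := Int.sq_of_isCoprime hcop1.symm (by linarith [h1] : s * r1 = u ^ 2)
    have hr1pos : 0 < r1 := by nlinarith
    have he : r1 = |e0| ^ 2 := by
      rcases he0 with h' | h' <;> rw [sq_abs] <;> [exact h'; nlinarith]
    have hf : s = |f0| ^ 2 := by
      rcases hf0 with h' | h' <;> rw [sq_abs] <;> [exact h'; nlinarith]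
    set e := |e0| with hedef
    set f := |f0| with hfdef
    have hepos : 0 < e := by nlinarith [abs_nonneg e0]
    have hfpos : 0 < f := by nlinarith [abs_nonneg f0]
    have huef : u = e * f := by
      have h2 : (u - e*f) * (u + e*f) = 0 := by
        rw [he, hf] at h1; linear_combination -h1
      rcases mul_eq_zero.mp h2 with h' | h'
      · linarith
      · exfalso; have := mul_pos hepos hfpos; linarith
    have heodd : ¬ (2:ℤ) ∣ e := by
      intro h2e
      have : (2:ℤ) ∣ r := by rw [hr1, he]; exact Dvd.dvd.mul_left (dvd_pow h2e two_ne_zero) 3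
      exact hrodd this
    have hfodd : ¬ (2:ℤ) ∣ f := by
      intro h2f
      exact hsodd (hf ▸ dvd_pow h2f two_ne_zero)
    obtain ⟨m, hm⟩ : (2:ℤ) ∣ f - e := by omega
    have h4v : 4 * v = (f + e) * (f - 3*e) := by
      have : 4 * v = s - r - 2*u := by rw [hrdef, hsdef]; ring
      rw [this, hf, hr1, he, huef]; ring
    have hf3e : f - 3*e > 0 := by nlinarith
    refine ⟨m, e, hepos, by omega, ?_, ?_, ?_, Or.inr ⟨?_, ?_⟩⟩
    · -- gcd
      set g := Int.gcd m e with hgdef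
      have hgm : (g:ℤ) ∣ m := Int.gcd_dvd_left _ _
      have hge : (g:ℤ) ∣ e := Int.gcd_dvd_right _ _
      have hgf : (g:ℤ) ∣ f := by
        have : f = 2*m + e := by omega
        rw [this]; exact dvd_add (Dvd.dvd.mul_left hgm 2) hge
      have hgr : (g:ℤ) ∣ r1 := he ▸ dvd_pow hge two_ne_zero
      have hgs : (g:ℤ) ∣ s := hf ▸ dvd_pow hgf two_ne_zero
      have := hcop1.isUnit_of_dvd' hgr hgs
      rcases Int.isUnit_iff.mp this with h' | h'
      · exact_mod_cast h'
      · exfalso; omega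
    · -- ¬ 3 ∣ m - e
      intro h3m
      have h3f : (3:ℤ) ∣ f := by omega
      exact h3s (hf ▸ dvd_pow h3f two_ne_zero)
    · -- a = ...
      have h4a : 4 * a = r + s := by rw [hrdef, hsdef]; ring
      rw [hr1, he, hf] at h4a
      have hfe : f = 2*m + e := by omega
      rw [hfe] at h4a
      nlinarith [h4a]
    · -- u = e² + 2(m+e)e
      have hfe : f = 2*m + e := by omega
      rw [huef, hfe]; ring
    · -- v = m² - e²
      have hfe : f = 2*m + e := by omega
      rw [hfe] at h4v
      nlinarith [h4v]
  · -- case 3 ∣ s : left disjunct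
    have h3r : ¬ (3:ℤ) ∣ r := fun hh => hn3 ⟨hh, h3s⟩
    obtain ⟨s1, hs1⟩ := h3s
    have h1 : r * s1 = u ^ 2 := by
      have : 3 * (r * s1) = 3 * u ^ 2 := by rw [← hrs, hs1]; ring
      linarith
    have hcop1 : IsCoprime r s1 := hcop.of_isCoprime_of_dvd_right ⟨3, by linarith [hs1]⟩
    obtain ⟨e0, he0⟩ := Int.sq_of_isCoprime hcop1 h1
    obtain ⟨f0, hf0⟩ := Int.sq_of_isCoprime hcop1.symm (by linarith [h1] : s1 * r = u ^ 2)
    have hs1pos : 0 < s1 := by nlinarith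
    have he : r = |e0| ^ 2 := by
      rcases he0 with h' | h' <;> rw [sq_abs] <;> [exact h'; nlinarith]
    have hf : s1 = |f0| ^ 2 := by
      rcases hf0 with h' | h' <;> rw [sq_abs] <;> [exact h'; nlinarith]
    set e := |e0| with hedef
    set f := |f0| with hfdef
    have hepos : 0 < e := by nlinarith [abs_nonneg e0]
    have hfpos : 0 < f := by nlinarith [abs_nonneg f0]
    have huef : u = e * f := by
      have h2 : (u - e*f) * (u + e*f) = 0 := by
        rw [he, hf] at h1; linear_combination -h1
      rcases mul_eq_zero.mp h2 with h' | h'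
      · linarith
      · exfalso; have := mul_pos hepos hfpos; linarith
    have heodd : ¬ (2:ℤ) ∣ e := by
      intro h2e; exact hrodd (he ▸ dvd_pow h2e two_ne_zero)
    have hfodd : ¬ (2:ℤ) ∣ f := by
      intro h2f
      have : (2:ℤ) ∣ s := by rw [hs1, hf]; exact Dvd.dvd.mul_left (dvd_pow h2f two_ne_zero) 3
      exact hsodd this
    obtain ⟨n, hn⟩ : (2:ℤ) ∣ f - e := by omega
    -- m = n + e, and n > 0 needs f > e
    have h4v : 4 * v = (3*f + e) * (f - e) := by
      have : 4 * v = s - r - 2*u := by rw [hrdef, hsdef]; ring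
      rw [this, hs1, hf, he, huef]; ring
    have hfe : 0 < f - e := by nlinarith
    refine ⟨n + e, n, by omega, by omega, ?_, ?_, ?_, Or.inl ⟨?_, ?_⟩⟩
    · -- gcd
      set g := Int.gcd (n + e) n with hgdef
      have hgm : (g:ℤ) ∣ n + e := Int.gcd_dvd_left _ _
      have hgn : (g:ℤ) ∣ n := Int.gcd_dvd_right _ _
      have hge : (g:ℤ) ∣ e := by
        have : e = (n + e) - n := by ring
        rw [this]; exact dvd_sub hgm hgn
      have hgf : (g:ℤ) ∣ f := by
        have : f = 2*n + e := by omega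
        rw [this]; exact dvd_add (Dvd.dvd.mul_left hgn 2) hge
      have hgr : (g:ℤ) ∣ r := he ▸ dvd_pow hge two_ne_zero
      have hgs : (g:ℤ) ∣ s1 := hf ▸ dvd_pow hgf two_ne_zero
      have := hcop1.isUnit_of_dvd' hgr hgs
      rcases Int.isUnit_iff.mp this with h' | h'
      · exact_mod_cast h'
      · exfalso; omega
    · -- ¬ 3 ∣ e
      intro h3e
      have h3e' : (3:ℤ) ∣ e := by omega
      exact h3r (he ▸ dvd_pow h3e' two_ne_zero)
    · -- a
      have h4a : 4 * a = r + s := by rw [hrdef, hsdef]; ring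
      rw [he, hs1, hf] at h4a
      have hfe2 : f = 2*n + e := by omega
      rw [hfe2] at h4a
      nlinarith [h4a]
    · -- u = (n+e)² - n²
      have hfe2 : f = 2*n + e := by omega
      rw [huef, hfe2]; ring
    · -- v = n² + 2(n+e)n
      have hfe2 : f = 2*n + e := by omega
      rw [hfe2] at h4v
      nlinarith [h4v]


theorem gilder_param_complete (a b c : ℤ) (h : IsPrimitiveEisenstein a b c)
    (hbc : b > c) (hne : (a, b, c) ≠ (1, 1, 1)) :
    ∃ m n : ℤ, 0 < n ∧ n < m ∧ Int.gcd m n = 1 ∧ ¬ m ≡ n [ZMOD 3] ∧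
      a = m ^ 2 + m * n + n ^ 2 ∧ b = m ^ 2 + 2 * m * n ∧
      (c = n ^ 2 + 2 * m * n ∨ c = m ^ 2 - n ^ 2) := by
  obtain ⟨ha, hb, hc, heq, hgcd⟩ := h
  have hu : 0 < b - c := by omega
  have hv : 0 < c := hc
  have heq' : a ^ 2 = (b - c) ^ 2 + (b - c) * c + c ^ 2 := by linear_combination heq
  -- gcd (b-c) c = 1
  have hguv : Int.gcd (b - c) c = 1 := by
    set g := Int.gcd (b - c) c with hgdef
    have hgu : (g:ℤ) ∣ b - c := Int.gcd_dvd_left _ _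
    have hgv : (g:ℤ) ∣ c := Int.gcd_dvd_right _ _
    have hgb : (g:ℤ) ∣ b := by
      have hb' : b = (b - c) + c := by ring
      rw [hb']; exact dvd_add hgu hgv
    have hga2 : (g:ℤ) ^ 2 ∣ a ^ 2 := by
      rw [heq']
      have hmid : (g:ℤ) ^ 2 ∣ (b - c) * c := by rw [sq]; exact mul_dvd_mul hgu hgv
      exact dvd_add (dvd_add (pow_dvd_pow_of_dvd hgu 2) hmid) (pow_dvd_pow_of_dvd hgv 2)
    have hga : (g:ℤ) ∣ a := (Int.pow_dvd_pow_iff two_ne_zero).mp hga2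
    have h2 : (g:ℤ) ∣ (Int.gcd a (Int.gcd b c) : ℤ) := Int.dvd_coe_gcd hga (Int.dvd_coe_gcd hgb hgv)
    rw [hgcd] at h2
    have h3 := Int.le_of_dvd one_pos h2
    have h4 : (0:ℤ) ≤ (g:ℤ) := Int.natCast_nonneg g
    have h5 : (g:ℤ) ≠ 0 := by
      rintro h0
      rw [h0] at h2
      norm_num at h2
    omega
  have hnotboth : ¬ ((2:ℤ) ∣ (b - c) ∧ (2:ℤ) ∣ c) := by
    rintro ⟨h2u, h2v⟩
    have := Int.dvd_gcd h2u h2v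
    rw [hguv] at this
    norm_num at this
  have hconv : ∀ m n : ℤ, ¬ (3:ℤ) ∣ (m - n) → ¬ m ≡ n [ZMOD 3] := by
    intro m n hnd hmod
    have := Int.ModEq.dvd hmod
    exact hnd (by omega)
  by_cases h2u : (2:ℤ) ∣ (b - c)
  · -- b - c even, c odd : apply key to (c, b - c)
    have h2v : ¬ (2:ℤ) ∣ c := fun hh => hnotboth ⟨h2u, hh⟩
    have heq'' : a ^ 2 = c ^ 2 + c * (b - c) + (b - c) ^ 2 := by linear_combination heq'
    have hguv' : Int.gcd c (b - c) = 1 := by rw [Int.gcd_comm]; exact hguv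
    obtain ⟨m, n, hn, hnm, hg, h3, haa, hcase⟩ := eis_key a c (b - c) ha hv hu hguv' heq'' h2v
    refine ⟨m, n, hn, hnm, hg, hconv m n h3, haa, ?_, ?_⟩
    · rcases hcase with ⟨hv', hu'⟩ | ⟨hv', hu'⟩ <;> linarith
    · rcases hcase with ⟨hv', hu'⟩ | ⟨hv', hu'⟩
      · exact Or.inr hv'
      · exact Or.inl hv'
  · obtain ⟨m, n, hn, hnm, hg, h3, haa, hcase⟩ := eis_key a (b - c) c ha hu hv hguv heq' h2u
    refine ⟨m, n, hn, hnm, hg, hconv m n h3, haa, ?_, ?_⟩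
    · rcases hcase with ⟨hu', hv'⟩ | ⟨hu', hv'⟩ <;> linarith
    · rcases hcase with ⟨hu', hv'⟩ | ⟨hu', hv'⟩
      · exact Or.inl hv'
      · exact Or.inr hv'
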